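/- Consider the linear model y = α·1_n + X·β + ε, where ε = (ε_1, …, ε_n) are square-integrable real random variables with E[ε_i] = 0 and E[ε_i·ε_j] = σ²·δ_{ij}. Let S be an r×n selection matrix and suppose X_c*ᵀX_c* is invertible, where X_c* = S·(I_n − J_n)·X. Then the slope estimator β̃_c = (X_c*ᵀX_c*)⁻¹·X_c*ᵀ·y_c*, with y_c* = S·(I_n − J_n)·y, has covariance matrix E[(β̃_c − β)·(β̃_c − β)ᵀ] = σ²·(X_c*ᵀX_c*)⁻¹ − σ²·(r²/n)·(X_c*ᵀX_c*)⁻¹·(x̄* − x̄)·(x̄* − x̄)ᵀ·(X_c*ᵀX_c*)⁻¹ (entrywise), where x̄ = n⁻¹·Xᵀ·1_n and x̄* = r⁻¹·(S·X)ᵀ·1_r. -/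

import Mathlib

open Matrix MeasureTheory

section Aux

variable {l m k : Type*} [Fintype m] [Fintype k]

private lemma aux_mul_vecMulVec (A : Matrix l m ℝ) (u : m → ℝ) (v : k → ℝ) :
    A * vecMulVec u v = vecMulVec (A *ᵥ u) v := by
  ext i j; simp [mul_apply, vecMulVec_apply, mulVec, dotProduct, Finset.sum_mul, mul_assoc]

private lemma aux_vecMulVec_mul (B : Matrix m k ℝ) (u : l → ℝ) (v : m → ℝ) :
    vecMulVec u v * B = vecMulVec u (v ᵥ* B) := by
  ext i j; simp [mul_apply, vecMulVec_apply, vecMul, dotProduct, Finset.mul_sum, mul_assoc]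

private lemma aux_vecMulVec_mulVec (u : l → ℝ) (v w : k → ℝ) :
    vecMulVec u v *ᵥ w = (v ⬝ᵥ w) • u := by
  ext i; simp only [vecMulVec_apply, mulVec, dotProduct, Pi.smul_apply, smul_eq_mul,
    Finset.sum_mul]
  exact Finset.sum_congr rfl fun x _ => by ring

private lemma aux_smul_vecMulVec (c : ℝ) (u : l → ℝ) (v : k → ℝ) :
    vecMulVec (c • u) v = c • vecMulVec u v := by
  ext i j; simp [vecMulVec_apply, mul_assoc]

private lemma aux_vecMulVec_smul (c : ℝ) (u : l → ℝ) (v : k → ℝ) :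
    vecMulVec u (c • v) = c • vecMulVec u v := by
  ext i j; simp [vecMulVec_apply]; ring

private lemma aux_L2_mul_integrable {Ω : Type*} [MeasureSpace Ω] {f g : Ω → ℝ}
    (hf : MemLp f 2) (hg : MemLp g 2) : Integrable (fun ω => f ω * g ω) := by
  have h : (fun ω => f ω * g ω) = fun ω => ((f ω + g ω)^2 - f ω^2 - g ω^2)/2 := by
    funext ω; ring
  rw [h]
  have h1 := (hf.add hg).integrable_sq
  simp only [Pi.add_apply] at h1
  exact ((h1.sub hf.integrable_sq).sub hg.integrable_sq).div_const 2

end Aux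

/-- Covariance matrix of the no-intercept subsample OLS slope estimator
computed from the centered full data:
`Var(β̃_c) = σ²(X_c*ᵀX_c*)⁻¹ − σ²(r²/n)(X_c*ᵀX_c*)⁻¹(x̄*−x̄)(x̄*−x̄)ᵀ(X_c*ᵀX_c*)⁻¹`. -/
theorem subsample_centered_ols_variance {Ω : Type*} [MeasureSpace Ω]
    [IsProbabilityMeasure (volume : Measure Ω)]
    (n r p : ℕ) (hn : 1 ≤ n)
    (X : Matrix (Fin n) (Fin p) ℝ) (α : ℝ) (β : Fin p → ℝ) (σ2 : ℝ)
    (ε : Ω → Fin n → ℝ)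
    (hεL2 : ∀ i, MemLp (fun ω => ε ω i) 2)
    (hεmean : ∀ i, ∫ ω, ε ω i = 0)
    (hεcov : ∀ i j, ∫ ω, ε ω i * ε ω j = if i = j then σ2 else 0)
    (y : Ω → Fin n → ℝ)
    (hy : ∀ ω, y ω = α • (1 : Fin n → ℝ) + X *ᵥ β + ε ω)
    (S : Matrix (Fin r) (Fin n) ℝ)
    (hS : ∃ φ : Fin r → Fin n, Function.Injective φ ∧
      ∀ i j, S i j = if j = φ i then 1 else 0)
    (Jn : Matrix (Fin n) (Fin n) ℝ)
    (hJn : Jn = (n : ℝ)⁻¹ • vecMulVec (1 : Fin n → ℝ) (1 : Fin n → ℝ))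
    (Xc : Matrix (Fin r) (Fin p) ℝ) (hXc : Xc = S * (1 - Jn) * X)
    (hinv : IsUnit (Xcᵀ * Xc))
    (yc : Ω → Fin r → ℝ) (hyc : ∀ ω, yc ω = (S * (1 - Jn)) *ᵥ y ω)
    (βc : Ω → Fin p → ℝ)
    (hβc : ∀ ω, βc ω = (Xcᵀ * Xc)⁻¹ *ᵥ (Xcᵀ *ᵥ yc ω))
    (xbar : Fin p → ℝ) (hxbar : xbar = (n : ℝ)⁻¹ • (Xᵀ *ᵥ (1 : Fin n → ℝ)))
    (xbarstar : Fin p → ℝ)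
    (hxbarstar : xbarstar = (r : ℝ)⁻¹ • ((S * X)ᵀ *ᵥ (1 : Fin r → ℝ))) :
    ∀ k l, ∫ ω, (βc ω k - β k) * (βc ω l - β l) =
      (σ2 • (Xcᵀ * Xc)⁻¹ -
        (σ2 * (r : ℝ) ^ 2 / (n : ℝ)) •
          ((Xcᵀ * Xc)⁻¹ * vecMulVec (xbarstar - xbar) (xbarstar - xbar) *
            (Xcᵀ * Xc)⁻¹)) k l := by
  obtain ⟨φ, hφ, hSφ⟩ := hS
  have hn0 : (n : ℝ) ≠ 0 := Nat.cast_ne_zero.mpr (Nat.one_le_iff_ne_zero.mp hn)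
  set G := Xcᵀ * Xc with hG
  set M := S * (1 - Jn) with hM
  set A := G⁻¹ * Xcᵀ * M with hA
  set v := xbarstar - xbar with hv
  have hGdet : IsUnit G.det := (Matrix.isUnit_iff_isUnit_det _).mp hinv
  have hGiG : G⁻¹ * G = 1 := Matrix.nonsing_inv_mul _ hGdet
  have hGGi : G * G⁻¹ = 1 := Matrix.mul_nonsing_inv _ hGdet
  -- basic facts about S
  have hSST : S * Sᵀ = 1 := by
    ext i i'
    simp only [mul_apply, transpose_apply, hSφ, one_apply, ite_mul, one_mul, zero_mul]
    rw [Finset.sum_ite_eq' Finset.univ (φ i) (fun j => if j = φ i' then (1:ℝ) else 0)]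
    simp [Function.Injective.eq_iff hφ, eq_comm]
  have hS1 : S *ᵥ (1 : Fin n → ℝ) = 1 := by
    ext i; simp [mulVec, dotProduct, hSφ]
  have hdot11 : (1 : Fin n → ℝ) ⬝ᵥ (1 : Fin n → ℝ) = (n : ℝ) := by
    simp [dotProduct]
  -- Jn facts
  have hJnT : Jnᵀ = Jn := by
    rw [hJn]; ext i j; simp [vecMulVec_apply]
  have hJn1 : Jn *ᵥ (1 : Fin n → ℝ) = 1 := by
    rw [hJn, Matrix.smul_mulVec, aux_vecMulVec_mulVec, hdot11, smul_smul,
      inv_mul_cancel₀ hn0, one_smul]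
  have hJnJn : Jn * Jn = Jn := by
    rw [hJn, Matrix.smul_mul, Matrix.mul_smul, aux_mul_vecMulVec, aux_vecMulVec_mulVec,
      hdot11, aux_smul_vecMulVec, smul_smul, smul_smul]
    congr 1
    field_simp
  have hC : (1 - Jn) * (1 - Jn) = 1 - Jn := by
    rw [Matrix.sub_mul, Matrix.mul_sub, Matrix.mul_sub, hJnJn]
    simp only [one_mul, mul_one]
    abel
  have hCT : (1 - Jn)ᵀ = 1 - Jn := by
    rw [transpose_sub, transpose_one, hJnT]
  -- M * 1ₙ = 0
  have hM1 : M *ᵥ (1 : Fin n → ℝ) = 0 := by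
    rw [hM, ← Matrix.mulVec_mulVec, Matrix.sub_mulVec, Matrix.one_mulVec, hJn1, sub_self,
      Matrix.mulVec_zero]
  -- βc ω = β + A *ᵥ ε ω
  have hresid : ∀ ω, βc ω = β + A *ᵥ ε ω := by
    intro ω
    have hXcM : M * X = Xc := by rw [hM, hXc]
    have hAX : A * X = 1 := by
      rw [hA, Matrix.mul_assoc, hXcM, Matrix.mul_assoc, ← hG, hGiG]
    rw [hβc, hyc, Matrix.mulVec_mulVec, Matrix.mulVec_mulVec, hy]
    have : G⁻¹ * Xcᵀ * (S * (1 - Jn)) = A := by rw [hA, hM]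
    rw [this, Matrix.mulVec_add, Matrix.mulVec_add, Matrix.mulVec_smul]
    have hA1 : A *ᵥ (1 : Fin n → ℝ) = 0 := by
      rw [hA, ← Matrix.mulVec_mulVec, hM1, Matrix.mulVec_zero]
    rw [hA1, Matrix.mulVec_mulVec, hAX, Matrix.one_mulVec, smul_zero, zero_add]
  -- Xcᵀ *ᵥ 1ᵣ = r • v
  have hXcT : Xcᵀ = Xᵀ * Mᵀ := by rw [hXc, transpose_mul]
  have hu : ∀ j, (Sᵀ *ᵥ (1 : Fin r → ℝ)) j = ∑ i, S i j := by
    intro j; simp [mulVec, dotProduct]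
  have hdotu : (1 : Fin n → ℝ) ⬝ᵥ (Sᵀ *ᵥ (1 : Fin r → ℝ)) = (r : ℝ) := by
    simp only [dotProduct, hu, one_apply, Pi.one_apply, one_mul]
    rw [Finset.sum_comm]
    simp [hSφ]
  have hXu : Xᵀ *ᵥ (Sᵀ *ᵥ (1 : Fin r → ℝ)) = (S * X)ᵀ *ᵥ (1 : Fin r → ℝ) := by
    rw [transpose_mul, ← Matrix.mulVec_mulVec]
  have hrxbarstar : (r : ℝ) • xbarstar = (S * X)ᵀ *ᵥ (1 : Fin r → ℝ) := by
    rcases Nat.eq_zero_or_pos r with hr | hr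
    · subst hr
      have : (S * X)ᵀ *ᵥ (1 : Fin 0 → ℝ) = 0 := by
        ext j; simp [mulVec, dotProduct]
      simp [this, hxbarstar]
    · have hr0 : (r : ℝ) ≠ 0 := Nat.cast_ne_zero.mpr (Nat.pos_iff_ne_zero.mp hr)
      rw [hxbarstar, smul_smul, mul_inv_cancel₀ hr0, one_smul]
  have hXc1 : Xcᵀ *ᵥ (1 : Fin r → ℝ) = (r : ℝ) • v := by
    have hMT : Mᵀ = (1 - Jn) * Sᵀ := by rw [hM, transpose_mul, hCT]
    rw [hXcT, ← Matrix.mulVec_mulVec, hMT, ← Matrix.mulVec_mulVec, Matrix.sub_mulVec,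
      Matrix.one_mulVec]
    have hJnu : Jn *ᵥ (Sᵀ *ᵥ (1 : Fin r → ℝ)) = ((r : ℝ) / n) • (1 : Fin n → ℝ) := by
      rw [hJn, Matrix.smul_mulVec, aux_vecMulVec_mulVec, hdotu, smul_smul]
      ring_nf
    rw [Matrix.mulVec_sub, hJnu, Matrix.mulVec_smul, hXu, hv, smul_sub, hrxbarstar,
      hxbar, smul_smul, div_eq_mul_inv]
  -- M * Mᵀ
  have hMMT : M * Mᵀ = 1 - (n : ℝ)⁻¹ • vecMulVec (1 : Fin r → ℝ) (1 : Fin r → ℝ) := by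
    rw [hM, transpose_mul, hCT, show S * (1 - Jn) * ((1 - Jn) * Sᵀ) = S * ((1-Jn)*(1-Jn)) * Sᵀ
      by simp only [Matrix.mul_assoc], hC, Matrix.mul_sub, Matrix.sub_mul, Matrix.mul_one,
      hSST]
    congr 1
    rw [hJn, Matrix.mul_smul, Matrix.smul_mul, aux_mul_vecMulVec, hS1, aux_vecMulVec_mul]
    rw [Matrix.vecMul_transpose, hS1]
  -- the central matrix identity
  have hmid : Xcᵀ * (M * Mᵀ) * Xc = G - ((r : ℝ)^2 / n) • vecMulVec v v := by
    rw [hMMT, Matrix.mul_sub, Matrix.mul_one, Matrix.sub_mul, ← hG]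
    congr 1
    rw [Matrix.mul_smul, Matrix.smul_mul, aux_mul_vecMulVec, hXc1, aux_vecMulVec_mul,
      (Matrix.mulVec_transpose Xc 1).symm, hXc1,
      aux_smul_vecMulVec, aux_vecMulVec_smul, smul_smul, smul_smul]
    congr 1
    field_simp
  have hAAT : A * Aᵀ = G⁻¹ - ((r : ℝ)^2 / n) • (G⁻¹ * vecMulVec v v * G⁻¹) := by
    have hGT : Gᵀ = G := by rw [hG, transpose_mul, transpose_transpose]
    have hGiT : (G⁻¹)ᵀ = G⁻¹ := by rw [Matrix.transpose_nonsing_inv, hGT]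
    have hAT : Aᵀ = Mᵀ * Xc * G⁻¹ := by
      calc Aᵀ = (G⁻¹ * (Xcᵀ * M))ᵀ := by rw [hA, Matrix.mul_assoc]
        _ = (Xcᵀ * M)ᵀ * (G⁻¹)ᵀ := transpose_mul _ _
        _ = Mᵀ * Xcᵀᵀ * (G⁻¹)ᵀ := by rw [transpose_mul]
        _ = Mᵀ * Xc * G⁻¹ := by rw [transpose_transpose, hGiT]
    have h1 : A * Aᵀ = G⁻¹ * (Xcᵀ * (M * Mᵀ) * Xc) * G⁻¹ := by
      rw [hAT, hA]; simp only [Matrix.mul_assoc]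
    rw [h1, hmid, Matrix.mul_sub, Matrix.sub_mul, hGiG, one_mul, Matrix.mul_smul,
      Matrix.smul_mul]
  -- now the integral computation
  intro k l
  have hεint : ∀ i j : Fin n, Integrable (fun ω => ε ω i * ε ω j) :=
    fun i j => aux_L2_mul_integrable (hεL2 i) (hεL2 j)
  have hprod : ∀ ω, (βc ω k - β k) * (βc ω l - β l) =
      ∑ i, ∑ j, (A k i * A l j) * (ε ω i * ε ω j) := by
    intro ω
    have h1 : βc ω k - β k = ∑ i, A k i * ε ω i := by
      rw [hresid]; simp [mulVec, dotProduct]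
    have h2 : βc ω l - β l = ∑ j, A l j * ε ω j := by
      rw [hresid]; simp [mulVec, dotProduct]
    rw [h1, h2, Finset.sum_mul_sum]
    exact Finset.sum_congr rfl fun i _ => Finset.sum_congr rfl fun j _ => by ring
  rw [integral_congr_ae (Filter.Eventually.of_forall hprod)]
  rw [integral_finset_sum _ (fun i _ => integrable_finset_sum _
    (fun j _ => ((hεint i j).const_mul _)))]
  have hsum : ∀ i : Fin n, ∫ ω, ∑ j, (A k i * A l j) * (ε ω i * ε ω j)
      = A k i * A l i * σ2 := by
    intro i
    rw [integral_finset_sum _ (fun j _ => ((hεint i j).const_mul _))]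
    have : ∀ j : Fin n, ∫ ω, (A k i * A l j) * (ε ω i * ε ω j)
        = (A k i * A l j) * (if i = j then σ2 else 0) := by
      intro j
      rw [integral_const_mul, hεcov]
    simp only [this, mul_ite, mul_zero]
    rw [Finset.sum_ite_eq Finset.univ i (fun j => A k i * A l j * σ2)]
    simp
  rw [Finset.sum_congr rfl (fun i _ => hsum i)]
  -- compare with the matrix expression
  have hAATkl : ∑ i, A k i * A l i * σ2 = σ2 * (A * Aᵀ) k l := by
    rw [mul_apply, Finset.mul_sum]
    exact Finset.sum_congr rfl fun i _ => by rw [transpose_apply]; ring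
  rw [hAATkl, hAAT]
  simp only [Matrix.sub_apply, Matrix.smul_apply, smul_eq_mul]
  ring
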